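/- Let X be a set, F a field, d a positive integer, and f : X → F^d linearly independent (the component functions f_0,...,f_{d-1} are linearly independent in the F-vector space of functions X → F). Then both the VC-dimension and the Littlestone dimension of the family C_f = {Z_{f,a} : a ∈ F^d, a ≠ 0} equal d − 1. -/

import Mathlib

open Module Submodule


/-- The zero set of the linear combination of the components of `f` with coefficients `a`. -/
def zeroSet {X F : Type*} [Field F] {d : ℕ} (f : X → Fin d → F) (a : Fin d → F) : Set X :=
  {c | ∑ i, a i * f c i = 0}

/-- The family of zero sets of nontrivial linear combinations of the components of `f`. -/
def zeroSets {X F : Type*} [Field F] {d : ℕ} (f : X → Fin d → F) : Set (Set X) :=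
  {s | ∃ a : Fin d → F, a ≠ 0 ∧ s = zeroSet f a}

/-- A family of sets `C` shatters `Y` if every subset of `Y` is the trace of a member of `C`. -/
def ShattersSet {X : Type*} (C : Set (Set X)) (Y : Set X) : Prop :=
  ∀ Z ⊆ Y, ∃ A ∈ C, A ∩ Y = Z

/-- The leaf `τ` of a binary tree of depth `n` with node labels `t` and leaf label `A`
is well-labeled. -/
def WellLabeledLeaf {X : Type*} (n : ℕ) (t : (k : ℕ) → (Fin k → Bool) → X)
    (A : Set X) (τ : Fin n → Bool) : Prop :=
  ∀ k : Fin n, (t k.val (fun j : Fin k.val => τ (Fin.castLE k.isLt.le j)) ∈ A) ↔ τ k = true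

/-- There is an `(X, C)`-labeled tree of depth `n` all of whose leaves are well-labeled. -/
def HasWellLabeledTree {X : Type*} (C : Set (Set X)) (n : ℕ) : Prop :=
  ∃ (t : (k : ℕ) → (Fin k → Bool) → X) (L : (Fin n → Bool) → Set X),
    (∀ τ, L τ ∈ C) ∧ ∀ τ, WellLabeledLeaf n t (L τ) τ


section
variable {X F : Type*} [Field F] {d : ℕ}

/-- the linear functional `w ↦ ∑ j, a j * w j`. -/
def dotL (a : Fin d → F) : (Fin d → F) →ₗ[F] F where
  toFun w := ∑ j, a j * w j
  map_add' w w' := by simp [mul_add, Finset.sum_add_distrib]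
  map_smul' c w := by simp [Finset.mul_sum, mul_left_comm]

lemma dotL_single (a : Fin d → F) (j : Fin d) : dotL a (Pi.single j 1) = a j := by
  simp [dotL, Pi.single_apply]

lemma eq_zero_of_dot_indep (v : Fin d → (Fin d → F)) (hv : LinearIndependent F v)
    (a : Fin d → F) (h : ∀ i, ∑ j, a j * v i j = 0) : a = 0 := by
  have hspan : span F (Set.range v) = ⊤ :=
    hv.span_eq_top_of_card_eq_finrank' (by simp)
  have hker : Set.range v ⊆ (LinearMap.ker (dotL a) : Set (Fin d → F)) := by
    rintro w ⟨i, rfl⟩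
    exact h i
  have htop : (⊤ : Submodule F (Fin d → F)) ≤ LinearMap.ker (dotL a) := by
    rw [← hspan]; exact span_le.mpr hker
  funext j
  have := htop (mem_top : (Pi.single j 1 : Fin d → F) ∈ ⊤)
  rw [LinearMap.mem_ker, dotL_single] at this
  simpa using this

lemma exists_solve (v : Fin d → (Fin d → F)) (hv : LinearIndependent F v)
    (c : Fin d → F) : ∃ a : Fin d → F, ∀ i, ∑ j, a j * v i j = c i := by
  set M : Matrix (Fin d) (Fin d) F := Matrix.of v with hM
  have hinj : Function.Injective M.mulVecLin := by
    rw [← LinearMap.ker_eq_bot]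
    rw [eq_bot_iff]
    intro a ha
    rw [LinearMap.mem_ker] at ha
    have : ∀ i, ∑ j, a j * v i j = 0 := by
      intro i
      have := congrFun ha i
      simpa [Matrix.mulVecLin, Matrix.mulVec, dotProduct, M, mul_comm] using this
    simpa using eq_zero_of_dot_indep v hv a this
  obtain ⟨a, ha⟩ := (LinearMap.injective_iff_surjective.mp hinj) c
  refine ⟨a, fun i => ?_⟩
  have := congrFun ha i
  simpa [Matrix.mulVecLin, Matrix.mulVec, dotProduct, M, mul_comm] using this


-- nonzero version
lemma exists_solve' (v : Fin d → (Fin d → F)) (hv : LinearIndependent F v)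
    (c : Fin d → F) (hc : c ≠ 0) : ∃ a : Fin d → F, a ≠ 0 ∧ ∀ i, ∑ j, a j * v i j = c i := by
  obtain ⟨a, ha⟩ := exists_solve v hv c
  refine ⟨a, ?_, ha⟩
  rintro rfl
  apply hc
  funext i
  rw [← ha i]
  simp

lemma span_range_eq_top (f : X → Fin d → F)
    (hf : LinearIndependent F (fun i : Fin d => fun x : X => f x i)) :
    span F (Set.range f) = ⊤ := by
  by_contra h
  obtain ⟨φ, hφ0, hφmap⟩ := Submodule.exists_dual_map_eq_bot_of_lt_top
    (lt_top_iff_ne_top.mpr h) inferInstance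
  have hvanish : ∀ w ∈ span F (Set.range f), φ w = 0 := by
    intro w hw
    have : φ w ∈ Submodule.map φ (span F (Set.range f)) := Submodule.mem_map_of_mem hw
    rw [hφmap] at this
    simpa using this
  set a : Fin d → F := fun i => φ (fun j => if i = j then 1 else 0) with ha
  have hrep : ∀ w : Fin d → F, φ w = ∑ i, w i * a i := by
    intro w
    rw [LinearMap.pi_apply_eq_sum_univ φ w]
    simp [ha, smul_eq_mul]
  have hzero : ∀ x : X, ∑ i, a i * f x i = 0 := by
    intro x
    have := hvanish (f x) (subset_span ⟨x, rfl⟩)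
    rw [hrep] at this
    simpa [mul_comm] using this
  have : ∀ i, a i = 0 := by
    apply Fintype.linearIndependent_iff.mp hf
    funext x
    simpa [smul_eq_mul] using hzero x
  apply hφ0
  apply LinearMap.ext
  intro w
  simp [hrep w, this]

lemma exists_good_points (f : X → Fin d → F)
    (hf : LinearIndependent F (fun i : Fin d => fun x : X => f x i)) :
    ∃ x : Fin d → X, LinearIndependent F (fun i => f (x i)) := by
  obtain ⟨b, hbsub, hbspan, hbind⟩ := exists_linearIndependent F (Set.range f)
  rw [span_range_eq_top f hf] at hbspan
  have hbfin : b.Finite := hbind.setFinite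
  haveI := hbfin.fintype
  have hcard : Fintype.card b = d := by
    have h1 := finrank_span_set_eq_card hbind
    rw [hbspan] at h1
    simp only [finrank_top] at h1
    rw [Set.toFinset_card] at h1
    simp at h1
    have h2 : Fintype.card b = b.ncard := by
      rw [← Nat.card_eq_fintype_card, Nat.card_coe_set_eq]
    omega
  let e : Fin d ≃ b := (Fintype.equivFinOfCardEq hcard).symm
  have hx : ∀ i : Fin d, ∃ x : X, f x = (e i : Fin d → F) := fun i => hbsub (e i).2
  choose x hxe using hx
  refine ⟨x, ?_⟩
  have : (fun i => f (x i)) = (Subtype.val ∘ e) := by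
    funext i; exact hxe i
  rw [this]
  exact hbind.comp e e.injective


lemma vc_lower (hd : 0 < d) (f : X → Fin d → F)
    (x : Fin d → X) (hx : LinearIndependent F (fun i => f (x i))) :
    ∃ Y : Finset X, Y.card = d - 1 ∧ ShattersSet (zeroSets f) ↑Y := by
  classical
  have hxinj : Function.Injective x := by
    intro i j hij
    exact hx.injective (by simp [hij])
  set emb : Fin (d-1) → X := fun i => x (Fin.castLE (Nat.sub_le d 1) i) with hemb
  have hembinj : Function.Injective emb := by
    intro i j hij
    have := hxinj hij
    exact Fin.castLE_injective _ this
  refine ⟨Finset.image emb Finset.univ, ?_, ?_⟩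
  · rw [Finset.card_image_of_injective _ hembinj, Finset.card_univ, Fintype.card_fin]
  · intro Z hZ
    set c : Fin d → F := fun i => if h : (i : ℕ) < d - 1 then (if x i ∈ Z then 0 else 1) else 1
      with hc
    have hcne : c ≠ 0 := by
      intro h0
      have := congrFun h0 ⟨d - 1, by omega⟩
      simp [hc] at this
    obtain ⟨a, ha0, ha⟩ := exists_solve' _ hx c hcne
    refine ⟨zeroSet f a, ⟨a, ha0, rfl⟩, ?_⟩
    ext y
    simp only [Set.mem_inter_iff, Finset.coe_image, Finset.coe_univ, Set.image_univ,
      Set.mem_range]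
    constructor
    · rintro ⟨hyA, i0, rfl⟩
      have hi : ((Fin.castLE (Nat.sub_le d 1) i0 : Fin d) : ℕ) < d - 1 := i0.isLt
      have := ha (Fin.castLE (Nat.sub_le d 1) i0)
      rw [hyA] at this
      by_contra hnz
      rw [hc] at this
      simp only [hi, dif_pos] at this
      rw [if_neg hnz] at this
      exact one_ne_zero this.symm
    · intro hyZ
      have hyY : y ∈ (↑(Finset.image emb Finset.univ) : Set X) := hZ hyZ
      simp only [Finset.coe_image, Finset.coe_univ, Set.image_univ, Set.mem_range] at hyY
      obtain ⟨i0, rfl⟩ := hyY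
      refine ⟨?_, i0, rfl⟩
      show ∑ j, a j * f (emb i0) j = 0
      have hi : ((Fin.castLE (Nat.sub_le d 1) i0 : Fin d) : ℕ) < d - 1 := i0.isLt
      rw [hemb] at hyZ ⊢
      rw [ha (Fin.castLE (Nat.sub_le d 1) i0), hc]
      simp [hi, hyZ]

lemma shatters_subset {C : Set (Set X)} {Y Y' : Finset X} (h : ShattersSet C ↑Y)
    (hsub : Y' ⊆ Y) : ShattersSet C ↑Y' := by
  intro Z hZ
  obtain ⟨A, hA, hAY⟩ := h Z (hZ.trans (by exact_mod_cast hsub))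
  refine ⟨A, hA, ?_⟩
  have : (↑Y' : Set X) = ↑Y ∩ ↑Y' :=
    (Set.inter_eq_right.mpr (by exact_mod_cast hsub)).symm
  rw [this, ← Set.inter_assoc, hAY, Set.inter_eq_left.mpr]
  exact hZ.trans (by rw [this])

lemma vc_upper (hd : 0 < d) (f : X → Fin d → F)
    (Y : Finset X) (hY : ShattersSet (zeroSets f) ↑Y) : Y.card ≤ d - 1 := by
  by_contra h
  have hdY : d ≤ Y.card := by omega
  obtain ⟨Y', hY'sub, hY'card⟩ := Finset.exists_subset_card_eq hdY
  have hY' := shatters_subset hY hY'sub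
  have e : Fin d ≃ Y' := (Y'.equivFin.trans (finCongr hY'card)).symm
  set y : Fin d → X := fun i => (e i : X) with hy
  have hyinj : Function.Injective y := fun i j hij => e.injective (Subtype.ext hij)
  have hymem : ∀ i, y i ∈ Y' := fun i => (e i).2
  have hysurj : ∀ z ∈ Y', ∃ i, y i = z := fun z hz => ⟨e.symm ⟨z, hz⟩, by simp [hy]⟩
  set v : Fin d → (Fin d → F) := fun i => f (y i) with hv
  by_cases hvi : LinearIndependent F v
  · obtain ⟨A, ⟨a, ha0, rfl⟩, hAY⟩ := hY' (↑Y') le_rfl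
    apply ha0
    apply eq_zero_of_dot_indep v hvi
    intro i
    have : y i ∈ zeroSet f a ∩ ↑Y' := by rw [hAY]; exact_mod_cast hymem i
    exact this.1
  · rw [Fintype.not_linearIndependent_iff] at hvi
    obtain ⟨g, hg0, i0, hgi0⟩ := hvi
    obtain ⟨A, ⟨a, ha0, rfl⟩, hAY⟩ := hY' ((↑Y' : Set X) \ {y i0}) Set.diff_subset
    have hdot : ∀ i, i ≠ i0 → ∑ j, a j * v i j = 0 := by
      intro i hi
      have : y i ∈ zeroSet f a ∩ ↑Y' := by
        rw [hAY]
        exact ⟨by exact_mod_cast hymem i, fun hmem => hi (hyinj (by simpa using hmem))⟩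
      exact this.1
    have hdot0 : ∑ j, a j * v i0 j ≠ 0 := by
      intro hz
      have : y i0 ∈ zeroSet f a ∩ ↑Y' := ⟨hz, by exact_mod_cast hymem i0⟩
      rw [hAY] at this
      exact this.2 rfl
    apply hdot0
    have hsum : ∑ i, g i * (∑ j, a j * v i j) = 0 := by
      have : ∑ i, g i * (∑ j, a j * v i j) = ∑ j, a j * (∑ i, g i • v i) j := by
        simp only [Finset.sum_apply, Pi.smul_apply, smul_eq_mul, Finset.mul_sum]
        rw [Finset.sum_comm]
        exact Finset.sum_congr rfl fun j _ => Finset.sum_congr rfl fun i _ => by ring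
      rw [this, hg0]
      simp
    rw [Finset.sum_eq_single i0] at hsum
    · exact (mul_eq_zero.mp hsum).resolve_left hgi0
    · intro i _ hi
      rw [hdot i hi, mul_zero]
    · intro h; exact absurd (Finset.mem_univ i0) h


open Classical in
/-- The adversary's branch: go toward `true` (i.e. "in the zero set") exactly when the
current node's vector is NOT in the span of the vectors of earlier `true` nodes. -/
noncomputable def pfx (f : X → Fin d → F) (t : (k : ℕ) → (Fin k → Bool) → X) :
    (k : ℕ) → (Fin k → Bool)
  | 0 => fun i => i.elim0
  | (k+1) => Fin.snoc (pfx f t k)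
      (if f (t k (pfx f t k)) ∈ Submodule.span F
          {w | ∃ j : Fin k, pfx f t k j = true ∧
            w = f (t j.val (fun i => pfx f t k (Fin.castLE j.isLt.le i)))}
        then false else true)

open Classical in
lemma pfx_succ (f : X → Fin d → F) (t : (k : ℕ) → (Fin k → Bool) → X) (k : ℕ) :
    pfx f t (k+1) = Fin.snoc (pfx f t k)
      (if f (t k (pfx f t k)) ∈ Submodule.span F
          {w | ∃ j : Fin k, pfx f t k j = true ∧
            w = f (t j.val (fun i => pfx f t k (Fin.castLE j.isLt.le i)))}
        then false else true) := rfl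

lemma pfx_restrict (f : X → Fin d → F) (t : (k : ℕ) → (Fin k → Bool) → X) :
    ∀ {k m : ℕ} (h : k ≤ m) (j : Fin k), pfx f t m (Fin.castLE h j) = pfx f t k j := by
  intro k m
  induction m with
  | zero => intro h j; interval_cases k; exact j.elim0
  | succ m ih =>
    intro h j
    by_cases hk : k = m + 1
    · subst hk
      rw [show Fin.castLE h j = j from Fin.ext rfl]
    · have hk' : k ≤ m := by omega
      have e1 : Fin.castLE h j = Fin.castSucc (Fin.castLE hk' j) := Fin.ext rfl
      rw [e1, pfx_succ, Fin.snoc_castSucc]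
      exact ih hk' j

lemma litt_upper (f : X → Fin d → F) (n : ℕ) (hdn : d ≤ n) :
    ¬ HasWellLabeledTree (zeroSets f) n := by
  classical
  rintro ⟨t, L, hL, hwl⟩
  set τ : Fin n → Bool := pfx f t n with hτdef
  obtain ⟨a, ha0, hA⟩ := hL τ
  have hwell := hwl τ
  rw [hA] at hwell
  set u : ℕ → (Fin d → F) := fun k => f (t k (pfx f t k)) with hu
  have hres : ∀ (k : Fin n), (fun j : Fin k.val => τ (Fin.castLE k.isLt.le j)) = pfx f t k.val :=
    fun k => funext fun j => pfx_restrict f t k.isLt.le j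
  have hwell' : ∀ k : Fin n, (∑ i, a i * u k.val i = 0) ↔ τ k = true := by
    intro k
    have := hwell k
    rw [hres k] at this
    exact this
  have hsets : ∀ k : ℕ,
      {w | ∃ j : Fin k, pfx f t k j = true ∧
        w = f (t j.val (fun i => pfx f t k (Fin.castLE j.isLt.le i)))}
      = {w | ∃ j : Fin k, pfx f t k j = true ∧ w = u j.val} := by
    intro k
    have hfun : ∀ j : Fin k,
        f (t j.val (fun i => pfx f t k (Fin.castLE j.isLt.le i))) = u j.val := by
      intro j
      have : (fun i => pfx f t k (Fin.castLE j.isLt.le i)) = pfx f t j.val :=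
        funext fun i => pfx_restrict f t j.isLt.le i
      rw [hu, this]
    ext w
    constructor
    · rintro ⟨j, hj, rfl⟩; exact ⟨j, hj, hfun j⟩
    · rintro ⟨j, hj, rfl⟩; exact ⟨j, hj, (hfun j).symm⟩
  have hτval : ∀ k : Fin n, τ k =
      (if u k.val ∈ Submodule.span F
          {w | ∃ j : Fin k.val, pfx f t k.val j = true ∧ w = u j.val}
        then false else true) := by
    intro k
    have h1 : τ k = pfx f t (k.val + 1) (Fin.last k.val) :=
      pfx_restrict f t k.isLt (Fin.last k.val)
    rw [h1, pfx_succ, Fin.snoc_last, hsets k.val]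
  have hτprev : ∀ (k : Fin n) (j : Fin k.val), pfx f t k.val j = τ ⟨j.val, j.isLt.trans k.isLt⟩ := by
    intro k j
    have := pfx_restrict f t (k.isLt.le : k.val ≤ n) j
    rw [hτdef, ← this]
    rfl
  have hdotzero : ∀ k : Fin n, τ k = true → ∑ i, a i * u k.val i = 0 :=
    fun k hk => (hwell' k).mpr hk
  have halltrue : ∀ k : Fin n, τ k = true := by
    intro k
    by_contra hk
    have hkf : τ k = false := by
      cases h : τ k
      · rfl
      · exact absurd h hk
    have hval := hτval k
    rw [hkf] at hval
    have hmem : u k.val ∈ Submodule.span F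
        {w | ∃ j : Fin k.val, pfx f t k.val j = true ∧ w = u j.val} := by
      by_contra hm
      rw [if_neg hm] at hval
      simp at hval
    have hker : {w | ∃ j : Fin k.val, pfx f t k.val j = true ∧ w = u j.val}
        ⊆ (LinearMap.ker (dotL a) : Set (Fin d → F)) := by
      rintro w ⟨j, hjt, rfl⟩
      rw [hτprev k j] at hjt
      have := hdotzero ⟨j.val, j.isLt.trans k.isLt⟩ hjt
      exact LinearMap.mem_ker.mpr (by simpa [dotL] using this)
    have hspan : Submodule.span F
        {w | ∃ j : Fin k.val, pfx f t k.val j = true ∧ w = u j.val}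
        ≤ LinearMap.ker (dotL a) := span_le.mpr hker
    have h0 : dotL a (u k.val) = 0 := hspan hmem
    have : τ k = true := (hwell' k).mp (by simpa [dotL] using h0)
    rw [hkf] at this
    simp at this
  have hnotin : ∀ k : Fin n, u k.val ∉ Submodule.span F
      (Set.range (fun j : Fin k.val => u j.val)) := by
    intro k hin
    have hval := hτval k
    rw [halltrue k] at hval
    have hnm : u k.val ∉ Submodule.span F
        {w | ∃ j : Fin k.val, pfx f t k.val j = true ∧ w = u j.val} := by
      by_contra hm
      rw [if_pos hm] at hval
      simp at hval
    apply hnm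
    have : {w | ∃ j : Fin k.val, pfx f t k.val j = true ∧ w = u j.val}
        = Set.range (fun j : Fin k.val => u j.val) := by
      ext w
      constructor
      · rintro ⟨j, _, rfl⟩; exact ⟨j, rfl⟩
      · rintro ⟨j, rfl⟩
        exact ⟨j, by rw [hτprev k j]; exact halltrue _, rfl⟩
    rw [this]
    exact hin
  have hindep : ∀ k : ℕ, k ≤ n → LinearIndependent F (fun j : Fin k => u j.val) := by
    intro k
    induction k with
    | zero => intro _; exact linearIndependent_empty_type
    | succ k ih =>
      intro hk1
      have hkn : k < n := hk1
      have hsnoc : (fun j : Fin (k+1) => u j.val)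
          = Fin.snoc (fun j : Fin k => u j.val) (u k) := by
        funext j
        refine Fin.lastCases ?_ ?_ j
        · rw [Fin.snoc_last]
          rfl
        · intro i
          rw [Fin.snoc_castSucc]
          rfl
      rw [hsnoc]
      exact linearIndependent_fin_snoc.mpr ⟨ih (by omega), hnotin ⟨k, hkn⟩⟩
  apply ha0
  apply eq_zero_of_dot_indep _ (hindep d hdn) a
  intro i
  exact hdotzero ⟨i.val, i.isLt.trans_le hdn⟩ (halltrue _)


lemma litt_lower (hd : 0 < d) (f : X → Fin d → F)
    (x : Fin d → X) (hx : LinearIndependent F (fun i => f (x i))) :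
    HasWellLabeledTree (zeroSets f) (d - 1) := by
  classical
  have key : ∀ τ : Fin (d-1) → Bool, ∃ a : Fin d → F, a ≠ 0 ∧
      ∀ i, ∑ j, a j * f (x i) j =
        (if h : (i : ℕ) < d - 1 then (if τ ⟨i, h⟩ = true then 0 else 1) else 1) := by
    intro τ
    apply exists_solve' _ hx
    intro h0
    have := congrFun h0 ⟨d - 1, by omega⟩
    simp at this
  choose a ha0 ha using key
  refine ⟨fun k σ => if h : k < d then x ⟨k, h⟩ else x ⟨0, hd⟩,
    fun τ => zeroSet f (a τ), fun τ => ⟨a τ, ha0 τ, rfl⟩, fun τ k => ?_⟩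
  have hk : k.val < d := by have := k.isLt; omega
  simp only [dif_pos hk]
  show (∑ j, a τ j * f (x ⟨k.val, hk⟩) j = 0) ↔ τ k = true
  rw [ha τ ⟨k.val, hk⟩]
  have hk' : ((⟨k.val, hk⟩ : Fin d) : ℕ) < d - 1 := k.isLt
  rw [dif_pos hk']
  have : (⟨((⟨k.val, hk⟩ : Fin d) : ℕ), hk'⟩ : Fin (d-1)) = k := by
    apply Fin.ext; rfl
  rw [this]
  cases hτ : τ k <;> simp

end

/-- If the component functions of `f : X → F^d` are linearly independent,
then both the VC-dimension and the Littlestone dimension of `C_f` equal `d - 1`. -/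
theorem statement4 {X F : Type*} [Field F] {d : ℕ} (hd : 0 < d) (f : X → Fin d → F)
    (hf : LinearIndependent F (fun i : Fin d => fun x : X => f x i)) :
    ((∃ Y : Finset X, Y.card = d - 1 ∧ ShattersSet (zeroSets f) ↑Y) ∧
      (∀ Y : Finset X, ShattersSet (zeroSets f) ↑Y → Y.card ≤ d - 1)) ∧
    (HasWellLabeledTree (zeroSets f) (d - 1) ∧
      (∀ n : ℕ, d ≤ n → ¬ HasWellLabeledTree (zeroSets f) n)) := by
  obtain ⟨x, hx⟩ := exists_good_points f hf
  exact ⟨⟨vc_lower hd f x hx, fun Y hY => vc_upper hd f Y hY⟩,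
    litt_lower hd f x hx, fun n hn => litt_upper f n hn⟩
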